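/- arXiv:2211.17150 — 4 statements merged into one kernel-verified Lean document; each statement's English description precedes it below -/
import Mathlib

section
/- Let V be a finite set and let G_1, ..., G_k be simple graphs, all on the same vertex set V, with edge sets E_1, ..., E_k. Let T be a tree with exactly k edges, together with a bijective labeling of its edges by {1, ..., k}. Then for every subset W ⊆ V with |W| > α(G_1) + α(G_2) + ... + α(G_k) there exists a map h from the vertex set of T to W (a homomorphic copy of T, not necessarily injective) such that for every i ∈ {1, ..., k}, if the edge of T labeled i has endpoints u and v, then {h(u), h(v)} is an edge of G_i. -/
open SimpleGraph hiding indepNum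

/-- The independence number of a finite simple graph: the largest size of a set of
vertices inducing no edges. -/
noncomputable def indepNum {V : Type*} [Fintype V] (G : SimpleGraph V) : ℕ :=
  sSup {m | ∃ s : Finset V, (∀ x ∈ s, ∀ y ∈ s, ¬ G.Adj x y) ∧ s.card = m}

lemma le_indepNum {V : Type*} [Fintype V] (G : SimpleGraph V) {s : Finset V}
    (hs : ∀ x ∈ s, ∀ y ∈ s, ¬ G.Adj x y) : s.card ≤ indepNum G :=
  le_csSup ⟨Fintype.card V, by rintro m ⟨t, _, rfl⟩; exact t.card_le_univ⟩ ⟨s, hs, rfl⟩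

lemma exists_leaf {α : Type*} [Fintype α] {T : SimpleGraph α} (hT : T.IsTree)
    (h2 : 1 < Fintype.card α) :
    ∃ x y, T.Adj x y ∧ ∀ z, T.Adj x z → z = y := by
  classical
  set S : Set ℕ := {n | ∃ (u : α) (v : α) (p : T.Walk u v), p.IsPath ∧ p.length = n} with hS
  have hbdd : BddAbove S := ⟨Fintype.card α, by
    rintro n ⟨u, v, p, hp, rfl⟩; exact hp.length_lt.le⟩
  have hne : S.Nonempty := by
    obtain ⟨a⟩ := hT.isConnected.nonempty
    exact ⟨0, a, a, .nil, by simp, rfl⟩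
  obtain ⟨u, v, p, hp, hl⟩ := Nat.sSup_mem hne hbdd
  have h1 : 1 ≤ sSup S := by
    obtain ⟨a, b, hab⟩ := Fintype.exists_pair_of_one_lt_card h2
    obtain ⟨w⟩ := hT.isConnected.preconnected a b
    have hmem : (w.toPath : T.Walk a b).length ∈ S := ⟨a, b, _, w.toPath.2, rfl⟩
    have hq : (w.toPath : T.Walk a b).length ≠ 0 := fun h => hab (Walk.eq_of_length_eq_zero h)
    exact le_trans (Nat.one_le_iff_ne_zero.2 hq) (le_csSup hbdd hmem)
  have hPnil : ¬ p.reverse.Nil := by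
    rw [Walk.nil_iff_length_eq, Walk.length_reverse, hl]
    omega
  obtain ⟨y, hvy, q, hq⟩ := Walk.not_nil_iff.mp hPnil
  have hPpath : p.reverse.IsPath := hp.reverse
  have hqpath : q.IsPath ∧ v ∉ q.support := by
    rw [hq, Walk.cons_isPath_iff] at hPpath; exact hPpath
  refine ⟨v, y, hvy, fun z hz => ?_⟩
  by_cases hzs : z ∈ p.reverse.support
  · have htpath : (p.reverse.takeUntil z hzs).IsPath := hp.reverse.takeUntil hzs
    have hnc := hT.IsAcyclic (Walk.cons hz.symm (p.reverse.takeUntil z hzs))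
    rw [Walk.cons_isCycle_iff] at hnc
    push_neg at hnc
    have hedge : s(z, v) ∈ (p.reverse.takeUntil z hzs).edges := hnc htpath
    have hedge' : s(z, v) ∈ p.reverse.edges :=
      Walk.edges_takeUntil_subset _ hzs hedge
    rw [hq, Walk.edges_cons] at hedge'
    rcases List.mem_cons.mp hedge' with h | h
    · rcases Sym2.eq_iff.mp h with ⟨h1', h2'⟩ | ⟨h1', _⟩
      · exact absurd h1' hz.ne'
      · exact h1'
    · exact absurd (Walk.snd_mem_support_of_mem_edges q h) hqpath.2
  · exfalso
    have hext : (Walk.cons hz.symm p.reverse).IsPath := by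
      rw [Walk.cons_isPath_iff]; exact ⟨hp.reverse, hzs⟩
    have : (Walk.cons hz.symm p.reverse).length ∈ S := ⟨z, u, _, hext, rfl⟩
    have hle := le_csSup hbdd this
    simp [Walk.length_cons, Walk.length_reverse, hl] at hle

lemma reachable_induce {α : Type*} {T : SimpleGraph α} {s : Set α} :
    ∀ {u v : α} (p : T.Walk u v) (_ : ∀ a ∈ p.support, a ∈ s) (hu : u ∈ s) (hv : v ∈ s),
    (T.induce s).Reachable ⟨u, hu⟩ ⟨v, hv⟩ := by
  intro u v p
  induction p with
  | nil => intro _ hu hv; rfl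
  | @cons a b c h q ih =>
    intro hs hu hv
    have hb : b ∈ s := hs b (by simp)
    have hadj : (T.induce s).Adj ⟨a, hu⟩ ⟨b, hb⟩ := by simpa using h
    exact hadj.reachable.trans (ih (fun x hx => hs x (by simp [hx])) hb hv)

lemma isTree_induce_leaf {α : Type*} [Fintype α] {T : SimpleGraph α} (hT : T.IsTree)
    {x y : α} (hxy : T.Adj x y) (hleaf : ∀ z, T.Adj x z → z = y) :
    (T.induce {a | a ≠ x}).IsTree := by
  classical
  constructor
  · haveI : Nonempty ↥{a | a ≠ x} := ⟨⟨y, hxy.ne'⟩⟩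
    refine Connected.mk ?_
    rintro ⟨u, hu⟩ ⟨v, hv⟩
    obtain ⟨w⟩ := hT.isConnected.preconnected u v
    set p : T.Walk u v := ↑(w.toPath)
    have hp : p.IsPath := w.toPath.2
    have hx : x ∉ p.support := by
      intro hx
      set t := p.takeUntil x hx with ht
      set d := p.dropUntil x hx with hd
      have htp : t.IsPath := hp.takeUntil hx
      have hdp : d.IsPath := hp.dropUntil hx
      have htnil : ¬ t.reverse.Nil := by
        rw [Walk.nil_iff_length_eq, Walk.length_reverse]
        intro h0
        exact hu (Walk.eq_of_length_eq_zero h0)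
      obtain ⟨a, ha, t', ht'⟩ := Walk.not_nil_iff.mp htnil
      have ha' : a = y := hleaf a ha
      have het : s(x, y) ∈ t.edges := by
        have h1 : s(x, a) ∈ t.reverse.edges := by rw [ht']; simp
        rw [Walk.edges_reverse, List.mem_reverse] at h1
        rwa [ha'] at h1
      have hdnil : ¬ d.Nil := by
        rw [Walk.nil_iff_length_eq]
        intro h0
        exact hv ((Walk.eq_of_length_eq_zero h0).symm)
      obtain ⟨b, hb, d', hd'⟩ := Walk.not_nil_iff.mp hdnil
      have hb' : b = y := hleaf b hb
      have hed : s(x, y) ∈ d.edges := by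
        have h1 : s(x, b) ∈ d.edges := by rw [hd']; simp
        rwa [hb'] at h1
      have hnd : (t.append d).edges.Nodup := by
        rw [Walk.take_spec p hx]
        exact hp.isTrail.edges_nodup
      rw [Walk.edges_append, List.nodup_append] at hnd
      exact hnd.2.2 _ het _ hed rfl
    exact reachable_induce p (fun a ha => show a ≠ x from fun he => hx (he ▸ ha)) hu hv
  · intro ⟨w, hw⟩ c hc
    exact hT.IsAcyclic _
      ((Walk.map_isCycle_iff_of_injective (f := (Embedding.induce {a | a ≠ x}).toHom)
        Subtype.val_injective).mpr hc)

lemma edge_eq_of_mem {α : Type*} {T : SimpleGraph α} {x y : α}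
    (hleaf : ∀ z, T.Adj x z → z = y) :
    ∀ e ∈ T.edgeSet, x ∈ e → e = s(x, y) := by
  intro e
  induction e using Sym2.ind with
  | _ a b =>
    intro he hx
    rw [mem_edgeSet] at he
    rcases Sym2.mem_iff.mp hx with rfl | rfl
    · rw [hleaf b he]
    · rw [hleaf a he.symm]
      exact Sym2.eq_swap

lemma map_val_mem {α : Type*} {T : SimpleGraph α} {s : Set α} :
    ∀ e' ∈ (T.induce s).edgeSet, Sym2.map (Subtype.val : s → α) e' ∈ T.edgeSet := by
  intro e'
  induction e' using Sym2.ind with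
  | _ a b =>
    intro he
    rw [mem_edgeSet] at he
    rw [Sym2.map_pair_eq, mem_edgeSet]
    exact he

universe u

lemma key_lemma {V : Type*} [Fintype V] : ∀ (n : ℕ), ∀ {α : Type u} [Fintype α]
    (T : SimpleGraph α), Fintype.card α = n → T.IsTree →
    ∀ {ι : Type} [Fintype ι] (ℓ : ι ≃ T.edgeSet) (G : ι → SimpleGraph V) (W : Finset V),
    (∑ i, indepNum (G i)) < W.card →
    ∃ h : α → V, (∀ a, h a ∈ W) ∧ ∀ i, Sym2.map h ((ℓ i : Sym2 α)) ∈ (G i).edgeSet := by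
  intro n
  induction n using Nat.strong_induction_on with
  | _ n IH =>
  intro α _ T hcard hT ι _ ℓ G W hW
  classical
  by_cases h2 : 1 < Fintype.card α
  · obtain ⟨x, y, hxy, hleaf⟩ := exists_leaf hT h2
    set s : Set α := {a | a ≠ x} with hs
    set T' := T.induce s with hT'def
    have hT'tree : T'.IsTree := isTree_induce_leaf hT hxy hleaf
    have hcard' : Fintype.card ↥s = n - 1 := by
      have h1 : Fintype.card ↥s = Fintype.card {a : α // ¬ a = x} :=
        Fintype.card_congr (Equiv.refl _)
      rw [h1, Fintype.card_subtype_compl, Fintype.card_subtype_eq, hcard]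
    set e0 : T.edgeSet := ⟨s(x, y), hxy⟩ with he0
    set j := ℓ.symm e0 with hj
    set F : T'.edgeSet → T.edgeSet :=
      fun e' => ⟨Sym2.map Subtype.val e'.1, map_val_mem e'.1 e'.2⟩ with hF
    have Finj : Function.Injective F := by
      intro a b hab
      have h1 := congrArg Subtype.val hab
      exact Subtype.ext (Sym2.map.injective Subtype.val_injective h1)
    have Fne : ∀ e', F e' ≠ e0 := by
      intro e' h
      have hx : x ∈ Sym2.map (Subtype.val : ↥s → α) e'.1 := by
        have h1 := congrArg Subtype.val h
        rw [show (F e').1 = Sym2.map Subtype.val e'.1 from rfl] at h1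
        rw [h1]
        simp [he0]
      obtain ⟨a, _, ha2⟩ := Sym2.mem_map.mp hx
      exact a.2 ha2
    have Fsurj : ∀ (e : Sym2 α) (he : e ∈ T.edgeSet),
        (⟨e, he⟩ : T.edgeSet) ≠ e0 → ∃ e', F e' = ⟨e, he⟩ := by
      intro e
      induction e using Sym2.ind with
      | _ a b =>
        intro he hne
        have hxe : x ∉ (s(a, b) : Sym2 α) := fun hx =>
          hne (Subtype.ext (edge_eq_of_mem hleaf _ he hx))
        have haa : a ≠ x := fun h => hxe (by rw [h]; simp)
        have hbb : b ≠ x := fun h => hxe (by rw [h]; simp)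
        refine ⟨⟨s((⟨a, haa⟩ : ↥s), (⟨b, hbb⟩ : ↥s)), ?_⟩, Subtype.ext ?_⟩
        · rw [mem_edgeSet]
          show T'.Adj _ _
          rw [hT'def]
          simpa using (mem_edgeSet T).mp he
        · simp [hF, Sym2.map_pair_eq]
    have hbij : Function.Bijective (fun e' : T'.edgeSet => (⟨ℓ.symm (F e'), by
        intro h
        apply Fne e'
        rw [hj] at h
        have h1 := congrArg ℓ h
        simpa using h1⟩ : {i : ι // i ≠ j})) := by
      constructor
      · intro a b hab
        have h1 : ℓ.symm (F a) = ℓ.symm (F b) := congrArg Subtype.val hab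
        exact Finj (ℓ.symm.injective h1)
      · rintro ⟨i, hi⟩
        have hne : ℓ i ≠ e0 := fun h => hi (by rw [hj, ← h, Equiv.symm_apply_apply])
        obtain ⟨e', he'⟩ := Fsurj (ℓ i).1 (ℓ i).2 (by simpa using hne)
        refine ⟨e', Subtype.ext ?_⟩
        show ℓ.symm (F e') = i
        rw [he']
        exact Equiv.symm_apply_apply ℓ i
    set ℓ' : {i : ι // i ≠ j} ≃ T'.edgeSet := (Equiv.ofBijective _ hbij).symm with hℓ'
    have hFℓ' : ∀ i' : {i : ι // i ≠ j}, F (ℓ' i') = ℓ i'.1 := by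
      intro i'
      have h1 : (Equiv.ofBijective _ hbij) (ℓ' i') = i' := by
        rw [hℓ']; exact Equiv.apply_symm_apply _ _
      have h2 : ℓ.symm (F (ℓ' i')) = i'.1 := congrArg Subtype.val h1
      rw [← h2, Equiv.apply_symm_apply]
    set G' : {i : ι // i ≠ j} → SimpleGraph V := fun i => G i.1 with hG'
    set W' : Finset V := W.filter (fun w => ∃ z ∈ W, (G j).Adj w z) with hW'def
    have hW'sub : W' ⊆ W := Finset.filter_subset _ _
    have hindep : (W \ W').card ≤ indepNum (G j) := by
      apply le_indepNum
      intro u hu v hv hadj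
      rw [Finset.mem_sdiff] at hu hv
      exact hu.2 (Finset.mem_filter.mpr ⟨hu.1, v, hv.1, hadj⟩)
    have hsum : indepNum (G j) + ∑ i : {i : ι // i ≠ j}, indepNum (G' i)
        = ∑ i, indepNum (G i) := by
      rw [Fintype.sum_eq_add_sum_compl j (fun i => indepNum (G i))]
      congr 1
      exact (Finset.sum_subtype (p := fun i => i ≠ j) ({j}ᶜ) (by intro i; simp) (fun i => indepNum (G i))).symm
    have hcardW : ∑ i : {i : ι // i ≠ j}, indepNum (G' i) < W'.card := by
      have h1 : (W \ W').card + W'.card = W.card := by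
        rw [Finset.card_sdiff_add_card_eq_card hW'sub]
      omega
    have hn1 : n - 1 < n := by
      rw [hcard] at h2; omega
    obtain ⟨h', hh'W, hh'e⟩ := IH (n - 1) hn1 T' hcard' hT'tree ℓ' G' W' hcardW
    have hyW' : h' ⟨y, hxy.ne'⟩ ∈ W' := hh'W ⟨y, hxy.ne'⟩
    rw [hW'def, Finset.mem_filter] at hyW'
    obtain ⟨hmemW, z, hzW, hzadj⟩ := hyW'
    set h : α → V := fun a => if ha : a = x then z else h' ⟨a, ha⟩ with hh
    have hval : ∀ a : ↥s, h a.1 = h' a := fun a => dif_neg a.2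
    refine ⟨h, ?_, ?_⟩
    · intro a
      by_cases ha : a = x
      · rw [hh]; simp only [dif_pos ha]; exact hzW
      · rw [hh]; simp only [dif_neg ha]; exact hW'sub (hh'W ⟨a, ha⟩)
    · intro i
      by_cases hi : i = j
      · have hℓi : ℓ i = e0 := by rw [hi, hj]; exact ℓ.apply_symm_apply e0
        have hi0 : (ℓ i : Sym2 α) = s(x, y) := by rw [hℓi]
        rw [hi0, Sym2.map_pair_eq, mem_edgeSet]
        have hx1 : h x = z := by rw [hh]; simp
        have hy1 : h y = h' ⟨y, hxy.ne'⟩ := hval ⟨y, hxy.ne'⟩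
        rw [hx1, hy1, hi]
        exact hzadj.symm
      · have h1 : (ℓ i : Sym2 α) = Sym2.map Subtype.val ((ℓ' ⟨i, hi⟩ : T'.edgeSet) : Sym2 ↥s) := by
          have := congrArg Subtype.val (hFℓ' ⟨i, hi⟩)
          exact this.symm
        rw [h1, Sym2.map_map]
        have hfun : h ∘ (Subtype.val : ↥s → α) = h' := funext fun a => hval a
        rw [hfun]
        exact hh'e ⟨i, hi⟩
  · have hempty : IsEmpty ι := by
      refine ⟨fun i => ?_⟩
      obtain ⟨e, he⟩ := ℓ i
      revert he
      induction e using Sym2.ind with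
      | _ a b =>
        intro he
        rw [mem_edgeSet] at he
        exact h2 (Fintype.one_lt_card_iff_nontrivial.mpr ⟨a, b, he.ne⟩)
    rw [@Finset.univ_eq_empty _ _ hempty, Finset.sum_empty] at hW
    obtain ⟨w, hw⟩ := Finset.card_pos.mp hW
    exact ⟨fun _ => w, fun _ => hw, fun i => (hempty.false i).elim⟩

/-- If `G 1, …, G k` are simple graphs on a common vertex set `V`, `T` is a tree whose
edges are bijectively labeled by `Fin k`, then any `W ⊆ V` with
`|W| > α(G 1) + ⋯ + α(G k)` contains a homomorphic copy `h` of `T` such that the image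
of the edge labeled `i` is an edge of `G i`. -/
theorem cutting_corners_tree_lemma {V α : Type*} [Fintype V] [Fintype α] {k : ℕ}
    (G : Fin k → SimpleGraph V) (T : SimpleGraph α) (hT : T.IsTree)
    (ℓ : Fin k ≃ T.edgeSet) (W : Finset V)
    (hW : (∑ i, indepNum (G i)) < W.card) :
    ∃ h : α → V, (∀ a, h a ∈ W) ∧
      ∀ i : Fin k, Sym2.map h ((ℓ i : Sym2 α)) ∈ (G i).edgeSet := by
  exact key_lemma (Fintype.card α) T rfl hT ℓ G W hW
end

section
/- Let G_i = (V_i, E_i), i = 1, ..., k, be finite simple graphs with nonempty vertex sets. Suppose W ⊆ V_1 × ... × V_k contains no orthogonal star, i.e. there is no choice of edges {u_i, w_i} ∈ E_i for i = 1, ..., k such that the k+1 tuples W_0 = (w_1, ..., w_k) and, for each i ∈ {1, ..., k}, W_i = (w_1, ..., w_{i-1}, u_i, w_{i+1}, ..., w_k) all lie in W. Then |W| / (|V_1| ⋯ |V_k|) ≤ Σ_{i=1}^{k} α(G_i)/|V_i|. -/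
lemma card_le_indepNum {V : Type*} [Fintype V] (G : SimpleGraph V) (s : Finset V)
    (h : ∀ x ∈ s, ∀ y ∈ s, ¬ G.Adj x y) : s.card ≤ indepNum G := by
  apply le_csSup
  · refine ⟨Fintype.card V, fun m hm => ?_⟩
    obtain ⟨t, -, rfl⟩ := hm
    simpa using t.card_le_univ
  · exact ⟨s, h, rfl⟩

/-- If `W ⊆ V 1 × ⋯ × V k` contains no orthogonal star, then
`|W| / (|V 1| ⋯ |V k|) ≤ Σ α(G i)/|V i|`. -/
theorem cutting_corners_orthogonal_star {k : ℕ} {V : Fin k → Type*}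
    [∀ i, Fintype (V i)] [∀ i, Nonempty (V i)]
    (G : ∀ i, SimpleGraph (V i)) (W : Finset (∀ i, V i))
    (hW : ¬ ∃ (u w : ∀ i, V i), (∀ i, (G i).Adj (u i) (w i)) ∧
      w ∈ W ∧ ∀ i, Function.update w i (u i) ∈ W) :
    (W.card : ℝ) / ∏ i, (Fintype.card (V i) : ℝ) ≤
      ∑ i, (indepNum (G i) : ℝ) / (Fintype.card (V i) : ℝ) := by
  classical
  set Wi : Fin k → Finset (∀ i, V i) :=
    fun i => W.filter (fun w => ∀ u, (G i).Adj u (w i) → Function.update w i u ∉ W) with hWi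
  -- W is covered by the pieces Wi
  have hsub : W ⊆ Finset.univ.biUnion Wi := by
    intro w hw
    by_contra hcon
    simp only [Finset.mem_biUnion, Finset.mem_univ, true_and, not_exists] at hcon
    have hch : ∀ i, ∃ u, (G i).Adj u (w i) ∧ Function.update w i u ∈ W := by
      intro i
      have h := hcon i
      simp only [hWi, Finset.mem_filter, hw, true_and, not_forall] at h
      obtain ⟨u, hu1, hu2⟩ := h
      exact ⟨u, hu1, not_not.mp hu2⟩
    choose u hu1 hu2 using hch
    exact hW ⟨u, w, hu1, hw, hu2⟩
  -- each piece is small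
  have hbound : ∀ i, (Wi i).card ≤
      indepNum (G i) * ∏ j ∈ Finset.univ.erase i, Fintype.card (V j) := by
    intro i
    set π : (∀ j, V j) → (∀ j : {j : Fin k // j ≠ i}, V j.1) := fun w j => w j.1 with hπ
    rw [Finset.card_eq_sum_card_fiberwise
      (f := π) (t := Finset.univ) (fun w _ => Finset.mem_univ _)]
    have hfibcard : ∀ g ∈ (Finset.univ : Finset (∀ j : {j : Fin k // j ≠ i}, V j.1)),
        ((Wi i).filter (fun w => π w = g)).card ≤ indepNum (G i) := by
      intro g _
      have hinj : Set.InjOn (fun w : ∀ j, V j => w i)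
          ↑((Wi i).filter (fun w => π w = g)) := by
        intro a ha b hb hab
        simp only [Finset.coe_filter, Set.mem_setOf_eq] at ha hb
        funext j
        by_cases hj : j = i
        · subst hj; exact hab
        · exact congrFun (ha.2.trans hb.2.symm) ⟨j, hj⟩
      rw [← Finset.card_image_of_injOn hinj]
      apply card_le_indepNum
      intro x hx y hy hxy
      simp only [Finset.mem_image, Finset.mem_filter] at hx hy
      obtain ⟨a, ⟨haW, haπ⟩, rfl⟩ := hx
      obtain ⟨b, ⟨hbW, hbπ⟩, rfl⟩ := hy
      rw [hWi, Finset.mem_filter] at haW hbW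
      have hb' : Function.update a i (b i) = b := by
        funext j
        by_cases hj : j = i
        · subst hj; simp
        · rw [Function.update_of_ne hj]
          exact congrFun (haπ.trans hbπ.symm) ⟨j, hj⟩
      exact haW.2 (b i) ((G i).adj_symm hxy) (by rw [hb']; exact hbW.1)
    calc ∑ g ∈ Finset.univ, ((Wi i).filter (fun w => π w = g)).card
        ≤ ∑ _g ∈ (Finset.univ : Finset (∀ j : {j : Fin k // j ≠ i}, V j.1)),
            indepNum (G i) := Finset.sum_le_sum hfibcard
      _ = Fintype.card (∀ j : {j : Fin k // j ≠ i}, V j.1) * indepNum (G i) := by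
          rw [Finset.sum_const, Finset.card_univ, smul_eq_mul]
      _ = indepNum (G i) * ∏ j ∈ Finset.univ.erase i, Fintype.card (V j) := by
          rw [Fintype.card_pi, mul_comm]
          congr 1
          exact (Finset.prod_subtype (Finset.univ.erase i) (fun x => by simp)
            (fun j => Fintype.card (V j))).symm
  have hcount : W.card ≤ ∑ i, indepNum (G i) * ∏ j ∈ Finset.univ.erase i,
      Fintype.card (V j) :=
    (Finset.card_le_card hsub).trans
      ((Finset.card_biUnion_le).trans (Finset.sum_le_sum fun i _ => hbound i))
  have hc : ∀ i, (0 : ℝ) < (Fintype.card (V i) : ℝ) := fun i =>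
    Nat.cast_pos.mpr Fintype.card_pos
  have hP : (0 : ℝ) < ∏ i, (Fintype.card (V i) : ℝ) :=
    Finset.prod_pos fun i _ => hc i
  rw [div_le_iff₀ hP]
  calc (W.card : ℝ)
      ≤ ∑ i, (indepNum (G i) : ℝ) * ∏ j ∈ Finset.univ.erase i,
          (Fintype.card (V j) : ℝ) := by exact_mod_cast hcount
    _ = (∑ i, (indepNum (G i) : ℝ) / (Fintype.card (V i) : ℝ)) *
          ∏ i, (Fintype.card (V i) : ℝ) := by
        rw [Finset.sum_mul]
        refine Finset.sum_congr rfl fun i _ => ?_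
        rw [← Finset.mul_prod_erase Finset.univ _ (Finset.mem_univ i)]
        have := (hc i).ne'
        field_simp
end

section
/- Let r < n be positive integers and let F be a family of r-element subsets of [n] = {1, ..., n}. Then for every partition of n and r into k non-negative summands n = n_1 + ... + n_k and r = r_1 + ... + r_k, there is a partition of [n] into k pairwise disjoint subsets [n] = N_1 ∪ ... ∪ N_k such that: (i) |N_i| = n_i for all i ∈ {1, ..., k}, and (ii) the subfamily F' = {F ∈ F : |F ∩ N_i| = r_i for all i ∈ {1, ..., k}} satisfies |F'| · C(n, r) ≥ |F| · C(n_1, r_1) ⋯ C(n_k, r_k), where C(a, b) denotes the binomial coefficient. -/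
open Finset Equiv

private lemma cc_map_trans {n : ℕ} (s : Finset (Fin n)) (e f : Equiv.Perm (Fin n)) :
    s.map (e.trans f).toEmbedding = (s.map e.toEmbedding).map f.toEmbedding := by
  rw [Finset.map_map]; rfl

private lemma cc_map_symm_cancel {n : ℕ} (s : Finset (Fin n)) (e : Equiv.Perm (Fin n)) :
    (s.map e.toEmbedding).map e.symm.toEmbedding = s := by
  rw [← cc_map_trans, Equiv.self_trans_symm]
  simp

private lemma cc_exists_perm_map {n : ℕ} (A B : Finset (Fin n)) (h : A.card = B.card) :
    ∃ τ : Equiv.Perm (Fin n), A.map τ.toEmbedding = B := by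
  classical
  have hc : Fintype.card {x // x ∈ A} = Fintype.card {x // x ∈ B} := by
    simp [Fintype.card_coe, h]
  refine ⟨(Fintype.equivOfCardEq hc).extendSubtype, ?_⟩
  apply Finset.eq_of_subset_of_card_le
  · intro x hx
    simp only [Finset.mem_map] at hx
    obtain ⟨a, ha, rfl⟩ := hx
    exact Equiv.extendSubtype_mem _ _ ha
  · simp [h]

private def ccFib {n : ℕ} (A B : Finset (Fin n)) : Finset (Equiv.Perm (Fin n)) :=
  Finset.univ.filter fun σ => A.map σ.symm.toEmbedding = B

private lemma cc_mem_fib {n : ℕ} (A B : Finset (Fin n)) (σ : Equiv.Perm (Fin n)) :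
    σ ∈ ccFib A B ↔ A.map σ.symm.toEmbedding = B := by
  simp [ccFib]

private lemma cc_fib_card_eq {n : ℕ} (A B A' B' : Finset (Fin n))
    (hA : A'.card = A.card) (hB : B'.card = B.card) :
    (ccFib A B).card = (ccFib A' B').card := by
  obtain ⟨τA, hτA⟩ := cc_exists_perm_map A' A hA
  obtain ⟨τB, hτB⟩ := cc_exists_perm_map B' B hB
  have hA' : A.map τA.symm.toEmbedding = A' := by rw [← hτA, cc_map_symm_cancel]
  have hB' : B.map τB.symm.toEmbedding = B' := by rw [← hτB, cc_map_symm_cancel]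
  apply Finset.card_bij' (fun σ _ => (τB.trans σ).trans τA.symm)
    (fun μ _ => (τB.symm.trans μ).trans τA)
  · intro σ hσ
    rw [cc_mem_fib] at hσ ⊢
    have : ((τB.trans σ).trans τA.symm).symm = τA.trans (σ.symm.trans τB.symm) := by
      ext x; simp
    rw [this, cc_map_trans, cc_map_trans, hτA, hσ, hB']
  · intro μ hμ
    rw [cc_mem_fib] at hμ ⊢
    have : ((τB.symm.trans μ).trans τA).symm = τA.symm.trans (μ.symm.trans τB) := by
      ext x; simp
    rw [this, cc_map_trans, cc_map_trans, hA', hμ, hτB]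
  · intro σ _; ext x; simp
  · intro μ _; ext x; simp

/-- Given a family `F` of `r`-element subsets of `[n]` and partitions
`n = n₁ + ⋯ + n_k`, `r = r₁ + ⋯ + r_k` into non-negative summands, there is a
partition `[n] = N₁ ∪ ⋯ ∪ N_k` with `|N i| = n i` such that the subfamily
`F' = {F ∈ F : |F ∩ N i| = r i for all i}` satisfies
`|F'| · C(n,r) ≥ |F| · C(n₁,r₁) ⋯ C(n_k,r_k)`. -/
theorem cutting_corners_partition {n r k : ℕ} (hr : 0 < r) (hrn : r < n)
    (F : Finset (Finset (Fin n))) (hF : ∀ A ∈ F, A.card = r)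
    (nn rr : Fin k → ℕ) (hn : ∑ i, nn i = n) (hrsum : ∑ i, rr i = r) :
    ∃ N : Fin k → Finset (Fin n),
      (∀ i j, i ≠ j → Disjoint (N i) (N j)) ∧
      (Finset.univ.biUnion N = Finset.univ) ∧
      (∀ i, (N i).card = nn i) ∧
      F.card * ∏ i, Nat.choose (nn i) (rr i) ≤
        (F.filter fun A => ∀ i, (A ∩ N i).card = rr i).card * Nat.choose n r := by
  classical
  -- base partition
  have hcard : Fintype.card (Σ i : Fin k, Fin (nn i)) = n := by simp [hn]
  set e : (Σ i : Fin k, Fin (nn i)) ≃ Fin n := Fintype.equivFinOfCardEq hcard with he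
  set N0 : Fin k → Finset (Fin n) :=
    fun i => Finset.univ.image (fun x : Fin (nn i) => e ⟨i, x⟩) with hN0
  have hmem0 : ∀ i (y : Fin n), y ∈ N0 i ↔ ∃ x : Fin (nn i), e ⟨i, x⟩ = y := by
    intro i y; simp [hN0]
  have hdisj0 : ∀ i j, i ≠ j → Disjoint (N0 i) (N0 j) := by
    intro i j hij
    rw [Finset.disjoint_left]
    intro y hyi hyj
    obtain ⟨x, hx⟩ := (hmem0 i y).1 hyi
    obtain ⟨x', hx'⟩ := (hmem0 j y).1 hyj
    have := e.injective (hx.trans hx'.symm)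
    exact hij (congrArg Sigma.fst this)
  have hcard0 : ∀ i, (N0 i).card = nn i := by
    intro i
    rw [hN0]
    rw [Finset.card_image_of_injective _ (fun a b hab => sigma_mk_injective (e.injective hab))]
    simp
  have hunion0 : Finset.univ.biUnion N0 = Finset.univ := by
    apply Finset.eq_univ_of_forall
    intro y
    rw [Finset.mem_biUnion]
    refine ⟨(e.symm y).1, Finset.mem_univ _, ?_⟩
    rw [hmem0]
    exact ⟨(e.symm y).2, by simp⟩
  -- the good family
  set good : Finset (Finset (Fin n)) :=
    Finset.univ.filter (fun B => ∀ i, (B ∩ N0 i).card = rr i) with hgood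
  have hmemgood : ∀ B, B ∈ good ↔ ∀ i, (B ∩ N0 i).card = rr i := by
    intro B; simp [hgood]
  have keyinter : ∀ t : Fin k → Finset (Fin n), (∀ i, t i ⊆ N0 i) →
      ∀ i, Finset.univ.biUnion t ∩ N0 i = t i := by
    intro t ht i
    ext x
    simp only [Finset.mem_inter, Finset.mem_biUnion, Finset.mem_univ, true_and]
    constructor
    · rintro ⟨⟨j, hj⟩, hx⟩
      by_cases hji : j = i
      · exact hji ▸ hj
      · exact absurd hx (Finset.disjoint_left.1 (hdisj0 j i hji) (ht j hj))
    · intro hx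
      exact ⟨⟨i, hx⟩, ht i hx⟩
  have hrec : ∀ B ∈ good, Finset.univ.biUnion (fun i => B ∩ N0 i) = B := by
    intro B _
    ext x
    simp only [Finset.mem_biUnion, Finset.mem_univ, true_and, Finset.mem_inter]
    constructor
    · rintro ⟨i, hx, _⟩; exact hx
    · intro hx
      have : x ∈ Finset.univ.biUnion N0 := by rw [hunion0]; exact Finset.mem_univ x
      rw [Finset.mem_biUnion] at this
      obtain ⟨i, _, hxi⟩ := this
      exact ⟨i, hx, hxi⟩
  have hgoodr : ∀ B ∈ good, B.card = r := by
    intro B hB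
    have hdj : ∀ i ∈ (Finset.univ : Finset (Fin k)), ∀ j ∈ (Finset.univ : Finset (Fin k)),
        i ≠ j → Disjoint (B ∩ N0 i) (B ∩ N0 j) := fun i _ j _ hij =>
      Disjoint.mono Finset.inter_subset_right Finset.inter_subset_right (hdisj0 i j hij)
    rw [← hrec B hB, Finset.card_biUnion hdj, ← hrsum]
    exact Finset.sum_congr rfl (fun i _ => (hmemgood B).1 hB i)
  have hgoodcard : good.card = ∏ i, Nat.choose (nn i) (rr i) := by
    have : good.card = (Fintype.piFinset (fun i => (N0 i).powersetCard (rr i))).card := by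
      apply Finset.card_bij' (fun B _ => fun i => B ∩ N0 i)
        (fun t _ => Finset.univ.biUnion t)
      · intro B hB
        rw [Fintype.mem_piFinset]
        intro i
        rw [Finset.mem_powersetCard]
        exact ⟨Finset.inter_subset_right, (hmemgood B).1 hB i⟩
      · intro t ht
        rw [Fintype.mem_piFinset] at ht
        have hsub : ∀ i, t i ⊆ N0 i := fun i => (Finset.mem_powersetCard.1 (ht i)).1
        rw [hmemgood]
        intro i
        rw [keyinter t hsub i]
        exact (Finset.mem_powersetCard.1 (ht i)).2
      · intro B hB; exact hrec B hB
      · intro t ht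
        rw [Fintype.mem_piFinset] at ht
        funext i
        exact keyinter t (fun j => (Finset.mem_powersetCard.1 (ht j)).1) i
    rw [this, Fintype.card_piFinset]
    exact Finset.prod_congr rfl (fun i _ => by rw [Finset.card_powersetCard, hcard0])
  -- fixed reference set
  obtain ⟨A₀, -, hA₀⟩ := Finset.exists_subset_card_eq (s := (Finset.univ : Finset (Fin n))) (n := r)
    (by simp [le_of_lt hrn])
  set c : ℕ := (ccFib A₀ A₀).card with hc
  have hcpos : 0 < c := by
    rw [hc]
    apply Finset.card_pos.2
    exact ⟨Equiv.refl _, by rw [cc_mem_fib]; simp⟩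
  -- total count of permutations
  have hfibdisj : ∀ A : Finset (Fin n), ∀ B ∈ (Finset.univ : Finset (Finset (Fin n))),
      ∀ B' ∈ (Finset.univ : Finset (Finset (Fin n))), B ≠ B' →
      Disjoint (ccFib A B) (ccFib A B') := by
    intro A B _ B' _ hBB'
    rw [Finset.disjoint_left]
    intro σ h1 h2
    rw [cc_mem_fib] at h1 h2
    exact hBB' (h1.symm.trans h2)
  have htotal : Nat.choose n r * c = Fintype.card (Equiv.Perm (Fin n)) := by
    have hcover : (Finset.univ : Finset (Equiv.Perm (Fin n))) =
        (Finset.powersetCard r Finset.univ).biUnion (fun B => ccFib A₀ B) := by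
      ext σ
      simp only [Finset.mem_univ, true_iff, Finset.mem_biUnion]
      exact ⟨A₀.map σ.symm.toEmbedding, by
        rw [Finset.mem_powersetCard_univ]; simp [hA₀], by rw [cc_mem_fib]⟩
    have := congrArg Finset.card hcover
    rw [Finset.card_univ, Finset.card_biUnion
      (fun B hB B' hB' h => hfibdisj A₀ B (Finset.mem_univ _) B' (Finset.mem_univ _) h)] at this
    rw [this]
    rw [Finset.sum_congr rfl (fun B hB => cc_fib_card_eq A₀ B A₀ A₀ rfl
      (by rw [hA₀, (Finset.mem_powersetCard_univ.1 hB)]))]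
    rw [Finset.sum_const, Finset.card_powersetCard, Finset.card_univ, Fintype.card_fin,
      smul_eq_mul]
  -- per-A count
  have perA : ∀ A ∈ F,
      (Finset.univ.filter fun σ : Equiv.Perm (Fin n) =>
        A.map σ.symm.toEmbedding ∈ good).card = good.card * c := by
    intro A hA
    have hcover : (Finset.univ.filter fun σ : Equiv.Perm (Fin n) =>
        A.map σ.symm.toEmbedding ∈ good) = good.biUnion (fun B => ccFib A B) := by
      ext σ
      simp only [Finset.mem_filter, Finset.mem_univ, true_and, Finset.mem_biUnion]
      constructor
      · intro h; exact ⟨_, h, by rw [cc_mem_fib]⟩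
      · rintro ⟨B, hB, hσ⟩; rw [cc_mem_fib] at hσ; rw [hσ]; exact hB
    rw [hcover, Finset.card_biUnion
      (fun B hB B' hB' h => hfibdisj A B (Finset.mem_univ _) B' (Finset.mem_univ _) h)]
    rw [Finset.sum_congr rfl (fun B hB => cc_fib_card_eq A B A₀ A₀
      (by rw [hA₀, hF A hA]) (by rw [hA₀, hgoodr B hB]))]
    rw [Finset.sum_const, smul_eq_mul]
  -- condition equivalence
  have hcond : ∀ (A : Finset (Fin n)) (σ : Equiv.Perm (Fin n)),
      (∀ i, (A ∩ (N0 i).map σ.toEmbedding).card = rr i) ↔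
      A.map σ.symm.toEmbedding ∈ good := by
    intro A σ
    rw [hmemgood]
    have key : ∀ i, (A.map σ.symm.toEmbedding ∩ N0 i).card
        = (A ∩ (N0 i).map σ.toEmbedding).card := by
      intro i
      have : A.map σ.symm.toEmbedding ∩ N0 i
          = (A ∩ (N0 i).map σ.toEmbedding).map σ.symm.toEmbedding := by
        rw [Finset.map_inter, cc_map_symm_cancel]
      rw [this, Finset.card_map]
    constructor
    · intro h i; rw [key i]; exact h i
    · intro h i; rw [← key i]; exact h i
  -- main sum
  set f : Equiv.Perm (Fin n) → ℕ := fun σ =>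
    (F.filter fun A => ∀ i, (A ∩ (N0 i).map σ.toEmbedding).card = rr i).card with hf
  have hsum : ∑ σ : Equiv.Perm (Fin n), f σ = F.card * (good.card * c) := by
    have this1 : ∀ σ, f σ = ∑ A ∈ F,
        if A.map σ.symm.toEmbedding ∈ good then 1 else 0 := by
      intro σ
      simp only [Finset.sum_boole, Nat.cast_id, hf]
      congr 1
      apply Finset.filter_congr
      intro A _
      simp only [hcond A σ]
    have this2 : ∀ A : Finset (Fin n), (∑ σ : Equiv.Perm (Fin n),
        if A.map σ.symm.toEmbedding ∈ good then (1:ℕ) else 0) =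
        (Finset.univ.filter fun σ : Equiv.Perm (Fin n) =>
          A.map σ.symm.toEmbedding ∈ good).card := by
      intro A
      simp [Finset.sum_boole]
    rw [Finset.sum_congr rfl (fun σ _ => this1 σ), Finset.sum_comm]
    rw [Finset.sum_congr rfl (fun A hA => (this2 A).trans (perA A hA))]
    rw [Finset.sum_const, smul_eq_mul]
  -- pigeonhole
  have hpig : ∃ σ : Equiv.Perm (Fin n), F.card * (good.card * c) ≤
      Fintype.card (Equiv.Perm (Fin n)) * f σ := by
    by_contra hcon
    push_neg at hcon
    have hlt : ∑ σ : Equiv.Perm (Fin n), Fintype.card (Equiv.Perm (Fin n)) * f σ <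
        ∑ σ : Equiv.Perm (Fin n), F.card * (good.card * c) :=
      Finset.sum_lt_sum_of_nonempty Finset.univ_nonempty (fun σ _ => hcon σ)
    rw [← Finset.mul_sum, hsum, Finset.sum_const, Finset.card_univ, smul_eq_mul,
      mul_comm] at hlt
    exact lt_irrefl _ hlt
  obtain ⟨σ, hσ⟩ := hpig
  rw [← htotal] at hσ
  have hfinal : F.card * good.card ≤ f σ * Nat.choose n r := by
    apply Nat.le_of_mul_le_mul_right _ hcpos
    calc F.card * good.card * c = F.card * (good.card * c) := by ring
      _ ≤ Nat.choose n r * c * f σ := hσ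
      _ = f σ * Nat.choose n r * c := by ring
  -- assemble
  refine ⟨fun i => (N0 i).map σ.toEmbedding, ?_, ?_, ?_, ?_⟩
  · intro i j hij
    exact (Finset.disjoint_map _).2 (hdisj0 i j hij)
  · apply Finset.eq_univ_of_forall
    intro y
    rw [Finset.mem_biUnion]
    have : σ.symm y ∈ Finset.univ.biUnion N0 := by rw [hunion0]; exact Finset.mem_univ _
    rw [Finset.mem_biUnion] at this
    obtain ⟨i, _, hi⟩ := this
    exact ⟨i, Finset.mem_univ _, Finset.mem_map.2 ⟨σ.symm y, hi, by simp⟩⟩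
  · intro i
    rw [Finset.card_map, hcard0]
  · rw [← hgoodcard]
    exact hfinal
end

section
/- Let N₁ ⊂ ℝ^{d₁} and N₂ ⊂ ℝ^{d₂} be finite sets and put m = |N₂|. Let V₁ ⊂ ℝ^{n₁} and V₂ ⊂ ℝ^{n₂} be finite sets, and let W be a subset of V₁ × V₂ ⊆ ℝ^{n₁} × ℝ^{n₂} = ℝ^{n₁ + n₂} (with the Euclidean metric) containing no isometric copy of N₁ × N₂. Then |W| ≤ |V₁| · α(V₂, N₂) + α(V₁, N₁) · |V₂|^m. -/
/-- The point of `ℝ^{d₁+d₂}` obtained by concatenating `x ∈ ℝ^{d₁}` and `y ∈ ℝ^{d₂}`. -/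
noncomputable def prodPoint {d₁ d₂ : ℕ} (x : EuclideanSpace ℝ (Fin d₁))
    (y : EuclideanSpace ℝ (Fin d₂)) : EuclideanSpace ℝ (Fin (d₁ + d₂)) :=
  WithLp.toLp 2 (fun i => Fin.append (fun j => x j) (fun j => y j) i)

/-- `M'` is an isometric copy of `M` in `ℝⁿ` (Euclidean metric): it is the image of a
distance-preserving map defined on `M`. -/
def IsIsomCopy {d n : ℕ} (M : Set (EuclideanSpace ℝ (Fin d)))
    (M' : Set (EuclideanSpace ℝ (Fin n))) : Prop :=
  ∃ f : EuclideanSpace ℝ (Fin d) → EuclideanSpace ℝ (Fin n),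
    (∀ x ∈ M, ∀ y ∈ M, dist (f x) (f y) = dist x y) ∧ M' = f '' M

/-- `alphaM V M`: the largest size of a subset of the finite set `V ⊂ ℝⁿ` containing
no isometric copy of `M`. -/
noncomputable def alphaM {d n : ℕ} (V : Finset (EuclideanSpace ℝ (Fin n)))
    (M : Set (EuclideanSpace ℝ (Fin d))) : ℕ :=
  sSup {m | ∃ W ⊆ V, (¬ ∃ M' ⊆ (W : Set (EuclideanSpace ℝ (Fin n))), IsIsomCopy M M') ∧
    W.card = m}

-- auxiliary machinery

local notation "E" n => EuclideanSpace ℝ (Fin n)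

noncomputable local instance instDecEqE {n : ℕ} : DecidableEq (EuclideanSpace ℝ (Fin n)) :=
  Classical.decEq _

def fstPt {a b : ℕ} (z : E (a + b)) : E a := WithLp.toLp 2 (fun j => z (Fin.castAdd b j))
def sndPt {a b : ℕ} (z : E (a + b)) : E b := WithLp.toLp 2 (fun j => z (Fin.natAdd a j))

lemma fstPt_prodPoint {a b : ℕ} (x : E a) (y : E b) : fstPt (prodPoint x y) = x := by
  ext j; simp [fstPt, prodPoint, Fin.append_left]

lemma sndPt_prodPoint {a b : ℕ} (x : E a) (y : E b) : sndPt (prodPoint x y) = y := by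
  ext j; simp [sndPt, prodPoint, Fin.append_right]

lemma dist_prodPoint {a b : ℕ} (x x' : E a) (y y' : E b) :
    dist (prodPoint x y) (prodPoint x' y') = Real.sqrt (dist x x' ^ 2 + dist y y' ^ 2) := by
  rw [EuclideanSpace.dist_eq, EuclideanSpace.dist_eq, EuclideanSpace.dist_eq]
  rw [Real.sq_sqrt (by positivity), Real.sq_sqrt (by positivity)]
  congr 1
  rw [Fin.sum_univ_add]
  congr 1 <;>
  · apply Finset.sum_congr rfl
    intro i _
    congr 1
    simp [prodPoint, Fin.append_left, Fin.append_right]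

lemma le_alphaM {d n : ℕ} (V : Finset (E n)) (M : Set (E d)) (W : Finset (E n))
    (h1 : W ⊆ V) (h2 : ¬ ∃ M' ⊆ (W : Set (E n)), IsIsomCopy M M') :
    W.card ≤ alphaM V M := by
  apply le_csSup
  · exact ⟨V.card, by rintro k ⟨W', hW', -, rfl⟩; exact Finset.card_le_card hW'⟩
  · exact ⟨W, h1, h2, rfl⟩

def frCond {d₂ n₁ n₂ : ℕ} (N₂ : Finset (E d₂)) (Wf : (E n₁) → Finset (E n₂))
    (v₁ : E n₁) (v₂ : E n₂) : Prop :=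
  ∃ q : ((E d₂) → (E n₂)) × (E d₂),
    (∀ y ∈ N₂, ∀ y' ∈ N₂, dist (q.1 y) (q.1 y') = dist y y') ∧
    (∀ y ∈ N₂, q.1 y ∈ Wf v₁) ∧ q.2 ∈ N₂ ∧ q.1 q.2 = v₂

noncomputable def frEnc {d₂ n₁ n₂ : ℕ} (N₂ : Finset (E d₂)) (Wf : (E n₁) → Finset (E n₂))
    (ystar : E d₂) (p : (_ : E n₁) × (E n₂)) : (E d₂) → (E n₂) :=
  letI := Classical.dec (frCond N₂ Wf p.1 p.2)
  if h : frCond N₂ Wf p.1 p.2 then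
    fun y => if y ∈ N₂ then h.choose.1 (Equiv.swap ystar h.choose.2 y) else 0
  else fun _ => 0

lemma swap_mem {d₂ : ℕ} {N₂ : Finset (E d₂)} {ystar y₀ : E d₂}
    (hs : ystar ∈ N₂) (h₀ : y₀ ∈ N₂) {y : E d₂} (hy : y ∈ N₂) :
    Equiv.swap ystar y₀ y ∈ N₂ := by
  rcases eq_or_ne y ystar with rfl | h1
  · rw [Equiv.swap_apply_left]; exact h₀
  rcases eq_or_ne y y₀ with rfl | h2
  · rw [Equiv.swap_apply_right]; exact hs
  · rw [Equiv.swap_apply_of_ne_of_ne h1 h2]; exact hy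

lemma frEnc_of_not_mem {d₂ n₁ n₂ : ℕ} (N₂ : Finset (E d₂)) (Wf : (E n₁) → Finset (E n₂))
    (ystar : E d₂) (p : (_ : E n₁) × (E n₂)) {y : E d₂} (hy : y ∉ N₂) :
    frEnc N₂ Wf ystar p y = 0 := by
  unfold frEnc
  split
  · simp [hy]
  · rfl

lemma frEnc_spec {d₂ n₁ n₂ : ℕ} (N₂ : Finset (E d₂)) (Wf : (E n₁) → Finset (E n₂))
    {ystar : E d₂} (hs : ystar ∈ N₂) (p : (_ : E n₁) × (E n₂))
    (h : frCond N₂ Wf p.1 p.2) :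
    frEnc N₂ Wf ystar p ystar = p.2 ∧
    (∀ y ∈ N₂, frEnc N₂ Wf ystar p y ∈ Wf p.1) ∧
    (∃ y₀ ∈ N₂, ∀ y ∈ N₂, ∀ y' ∈ N₂,
      dist (frEnc N₂ Wf ystar p (Equiv.swap ystar y₀ y))
        (frEnc N₂ Wf ystar p (Equiv.swap ystar y₀ y')) = dist y y') := by
  have hEnc : ∀ y, frEnc N₂ Wf ystar p y =
      (if y ∈ N₂ then h.choose.1 (Equiv.swap ystar h.choose.2 y) else 0) := by
    intro y
    unfold frEnc
    rw [dif_pos h]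
  obtain ⟨hcopy, hmem, hy₀, hval⟩ := h.choose_spec
  have hswap : ∀ y ∈ N₂, frEnc N₂ Wf ystar p (Equiv.swap ystar h.choose.2 y)
      = h.choose.1 y := by
    intro y hy
    rw [hEnc]
    have hmem' : Equiv.swap ystar h.choose.2 y ∈ N₂ := swap_mem hs hy₀ hy
    simp only [hmem', if_true, Equiv.swap_apply_self]
  refine ⟨?_, ?_, ?_⟩
  · rw [hEnc, if_pos hs, Equiv.swap_apply_left, hval]
  · intro y hy
    rw [hEnc, if_pos hy]
    exact hmem _ (swap_mem hs hy₀ hy)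
  · refine ⟨h.choose.2, hy₀, fun y hy y' hy' => ?_⟩
    rw [hswap y hy, hswap y' hy']
    exact hcopy y hy y' hy'

/-- Key estimate in the Frankl–Rödl product theorem: if `W ⊆ V₁ × V₂ ⊂ ℝ^{n₁+n₂}`
contains no isometric copy of `N₁ × N₂`, then
`|W| ≤ |V₁| · α(V₂, N₂) + α(V₁, N₁) · |V₂|^m` where `m = |N₂|`. -/
theorem frankl_rodl_product_estimate {d₁ d₂ n₁ n₂ : ℕ}
    (N₁ : Finset (EuclideanSpace ℝ (Fin d₁))) (N₂ : Finset (EuclideanSpace ℝ (Fin d₂)))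
    (V₁ : Finset (EuclideanSpace ℝ (Fin n₁))) (V₂ : Finset (EuclideanSpace ℝ (Fin n₂)))
    (W : Finset (EuclideanSpace ℝ (Fin (n₁ + n₂))))
    (hW : (W : Set (EuclideanSpace ℝ (Fin (n₁ + n₂)))) ⊆
      Set.image2 prodPoint (V₁ : Set (EuclideanSpace ℝ (Fin n₁))) (V₂ : Set (EuclideanSpace ℝ (Fin n₂))))
    (hno : ¬ ∃ M' ⊆ (W : Set (EuclideanSpace ℝ (Fin (n₁ + n₂)))),
      IsIsomCopy (Set.image2 prodPoint (N₁ : Set (EuclideanSpace ℝ (Fin d₁))) (N₂ : Set (EuclideanSpace ℝ (Fin d₂)))) M') :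
    W.card ≤ V₁.card * alphaM V₂ (N₂ : Set (EuclideanSpace ℝ (Fin d₂))) + alphaM V₁ (N₁ : Set (EuclideanSpace ℝ (Fin d₁))) * V₂.card ^ N₂.card := by
  classical
  -- degenerate cases
  rcases N₂.eq_empty_or_nonempty with hN₂ | hN₂
  · exact absurd ⟨∅, Set.empty_subset _, fun _ => 0,
      by rintro x ⟨a, ha, b, hb, rfl⟩; simp [hN₂] at hb, by simp [hN₂]⟩ hno
  rcases N₁.eq_empty_or_nonempty with hN₁ | hN₁
  · exact absurd ⟨∅, Set.empty_subset _, fun _ => 0,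
      by rintro x ⟨a, ha, b, hb, rfl⟩; simp [hN₁] at ha, by simp [hN₁]⟩ hno
  obtain ⟨ystar, hystar⟩ := hN₂
  -- fibers
  set Wf : EuclideanSpace ℝ (Fin n₁) → Finset (EuclideanSpace ℝ (Fin n₂)) :=
    fun v₁ => V₂.filter (fun v₂ => prodPoint v₁ v₂ ∈ W) with hWfdef
  have hmem_Wf : ∀ v₁ v₂, v₂ ∈ Wf v₁ ↔ v₂ ∈ V₂ ∧ prodPoint v₁ v₂ ∈ W := by
    intro v₁ v₂; rw [hWfdef]; exact Finset.mem_filter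
  -- injectivity of prodPoint
  have hinj2 : ∀ (v₁ : EuclideanSpace ℝ (Fin n₁)),
      Function.Injective (prodPoint v₁ :
        EuclideanSpace ℝ (Fin n₂) → EuclideanSpace ℝ (Fin (n₁ + n₂))) := by
    intro v₁ a b h
    have := congrArg sndPt h
    rwa [sndPt_prodPoint, sndPt_prodPoint] at this
  -- split of W
  have hsplit : W = V₁.biUnion (fun v₁ => (Wf v₁).image (prodPoint v₁)) := by
    ext w
    constructor
    · intro hw
      obtain ⟨x, hx, y, hy, rfl⟩ := hW hw
      exact Finset.mem_biUnion.2 ⟨x, hx, Finset.mem_image.2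
        ⟨y, (hmem_Wf x y).2 ⟨hy, hw⟩, rfl⟩⟩
    · intro hw
      obtain ⟨v₁, hv₁, hw2⟩ := Finset.mem_biUnion.1 hw
      obtain ⟨w', hw', rfl⟩ := Finset.mem_image.1 hw2
      exact ((hmem_Wf v₁ w').1 hw').2
  have hcardW : W.card = ∑ v₁ ∈ V₁, (Wf v₁).card := by
    rw [hsplit, Finset.card_biUnion]
    · exact Finset.sum_congr rfl fun v₁ _ => Finset.card_image_of_injective _ (hinj2 v₁)
    · intro u hu v hv huv
      rw [Function.onFun, Finset.disjoint_left]
      rintro w hw1 hw2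
      obtain ⟨a, _, rfl⟩ := Finset.mem_image.1 hw1
      obtain ⟨b, _, hb⟩ := Finset.mem_image.1 hw2
      apply huv
      have := congrArg fstPt hb
      rw [fstPt_prodPoint, fstPt_prodPoint] at this
      exact this.symm
  -- the two filter pieces
  set Cs : EuclideanSpace ℝ (Fin n₁) → Finset (EuclideanSpace ℝ (Fin n₂)) :=
    fun v₁ => (Wf v₁).filter (fun v₂ => ¬ frCond N₂ Wf v₁ v₂) with hCdef
  set Ds : EuclideanSpace ℝ (Fin n₁) → Finset (EuclideanSpace ℝ (Fin n₂)) :=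
    fun v₁ => (Wf v₁).filter (fun v₂ => frCond N₂ Wf v₁ v₂) with hDdef
  have hCD : ∀ v₁, (Cs v₁).card + (Ds v₁).card = (Wf v₁).card := by
    intro v₁
    rw [hCdef, hDdef, add_comm]
    exact Finset.card_filter_add_card_filter_not _
  -- bound for C-pieces
  have hCbound : ∀ v₁, (Cs v₁).card ≤ alphaM V₂ (N₂ : Set (EuclideanSpace ℝ (Fin d₂))) := by
    intro v₁
    apply le_alphaM
    · exact (Finset.filter_subset _ _).trans (Finset.filter_subset _ _)
    · rintro ⟨M', hM'sub, f, hf, hM'eq⟩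
      have h1 : f ystar ∈ Cs v₁ := hM'sub (hM'eq ▸ ⟨ystar, hystar, rfl⟩)
      have h2 := (Finset.mem_filter.1 h1).2
      apply h2
      refine ⟨⟨f, ystar⟩, ?_, ?_, hystar, rfl⟩
      · intro y hy y' hy'
        exact hf y hy y' hy'
      · intro y hy
        have : f y ∈ Cs v₁ := hM'sub (hM'eq ▸ ⟨y, hy, rfl⟩)
        exact Finset.mem_of_mem_filter _ this
  -- Lemma A: common-copy sets on the V₁ side are copy-free
  have hA : ∀ φ : EuclideanSpace ℝ (Fin d₂) → EuclideanSpace ℝ (Fin n₂),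
      (∀ y ∈ N₂, ∀ y' ∈ N₂, dist (φ y) (φ y') = dist y y') →
      (V₁.filter (fun v₁ => ∀ y ∈ N₂, prodPoint v₁ (φ y) ∈ W)).card ≤
        alphaM V₁ (N₁ : Set (EuclideanSpace ℝ (Fin d₁))) := by
    intro φ hφ
    apply le_alphaM
    · exact Finset.filter_subset _ _
    · rintro ⟨M', hM'sub, ψ, hψ, hM'eq⟩
      apply hno
      set F : EuclideanSpace ℝ (Fin (d₁ + d₂)) → EuclideanSpace ℝ (Fin (n₁ + n₂)) :=
        fun z => prodPoint (ψ (fstPt z)) (φ (sndPt z)) with hFdef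
      refine ⟨F '' (Set.image2 prodPoint (N₁ : Set _) (N₂ : Set _)), ?_, F, ?_, rfl⟩
      · rintro _ ⟨z, ⟨x, hx, y, hy, rfl⟩, rfl⟩
        have : F (prodPoint x y) = prodPoint (ψ x) (φ y) := by
          rw [hFdef]; simp only [fstPt_prodPoint, sndPt_prodPoint]
        rw [this]
        have hψx : ψ x ∈ V₁.filter (fun v₁ => ∀ y ∈ N₂, prodPoint v₁ (φ y) ∈ W) :=
          hM'sub (hM'eq ▸ ⟨x, hx, rfl⟩)
        exact (Finset.mem_filter.1 hψx).2 y hy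
      · rintro z ⟨x, hx, y, hy, rfl⟩ z' ⟨x', hx', y', hy', rfl⟩
        rw [hFdef]
        simp only [fstPt_prodPoint, sndPt_prodPoint]
        rw [dist_prodPoint, dist_prodPoint, hψ x hx x' hx', hφ y hy y' hy']
  -- the pair set
  set Pairs : Finset ((_ : EuclideanSpace ℝ (Fin n₁)) × EuclideanSpace ℝ (Fin n₂)) :=
    V₁.sigma (fun v₁ => Ds v₁) with hPdef
  have hPcond : ∀ p ∈ Pairs, frCond N₂ Wf p.1 p.2 := by
    intro p hp
    exact (Finset.mem_filter.1 (Finset.mem_sigma.1 hp).2).2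
  have hPV₁ : ∀ p ∈ Pairs, p.1 ∈ V₁ := fun p hp => (Finset.mem_sigma.1 hp).1
  have hPairscard : ∑ v₁ ∈ V₁, (Ds v₁).card = Pairs.card := (Finset.card_sigma _ _).symm
  -- fiber bound
  set Θ := frEnc N₂ Wf ystar with hΘdef
  have hfiber : ∀ F ∈ Pairs.image Θ,
      (Pairs.filter (fun p => Θ p = F)).card ≤
        alphaM V₁ (N₁ : Set (EuclideanSpace ℝ (Fin d₁))) := by
    intro F hF
    obtain ⟨p₀, hp₀, hFeq⟩ := Finset.mem_image.1 hF
    obtain ⟨-, -, y₀, hy₀, hcopy⟩ := frEnc_spec N₂ Wf hystar p₀ (hPcond p₀ hp₀)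
    set ψF : EuclideanSpace ℝ (Fin d₂) → EuclideanSpace ℝ (Fin n₂) :=
      fun y => F (Equiv.swap ystar y₀ y) with hψFdef
    have hψFcopy : ∀ y ∈ N₂, ∀ y' ∈ N₂, dist (ψF y) (ψF y') = dist y y' := by
      intro y hy y' hy'
      rw [hψFdef]
      simp only [← hFeq]
      exact hcopy y hy y' hy'
    calc (Pairs.filter (fun p => Θ p = F)).card
        ≤ (V₁.filter (fun v₁ => ∀ y ∈ N₂, prodPoint v₁ (ψF y) ∈ W)).card := by
          apply Finset.card_le_card_of_injOn (fun p => p.1)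
          · intro p hp
            have hpP := Finset.mem_of_mem_filter _ hp
            have hΘp : Θ p = F := (Finset.mem_filter.1 hp).2
            obtain ⟨-, hmem, -⟩ := frEnc_spec N₂ Wf hystar p (hPcond p hpP)
            refine Finset.mem_filter.2 ⟨hPV₁ p hpP, ?_⟩
            intro y hy
            have hsy : Equiv.swap ystar y₀ y ∈ N₂ := swap_mem hystar hy₀ hy
            have : ψF y ∈ Wf p.1 := by
              rw [hψFdef]
              simp only
              rw [← hΘp]
              exact hmem _ hsy
            exact ((hmem_Wf p.1 (ψF y)).1 this).2
          · intro p hp q hq h1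
            have hΘp : Θ p = F := (Finset.mem_filter.1 hp).2
            have hΘq : Θ q = F := (Finset.mem_filter.1 hq).2
            obtain ⟨hps, -, -⟩ := frEnc_spec N₂ Wf hystar p
              (hPcond p (Finset.mem_of_mem_filter _ hp))
            obtain ⟨hqs, -, -⟩ := frEnc_spec N₂ Wf hystar q
              (hPcond q (Finset.mem_of_mem_filter _ hq))
            have h2 : p.2 = q.2 := by
              rw [← hps, ← hqs, hΘdef] at *
              rw [hΘp, hΘq]
            exact Sigma.ext h1 (heq_of_eq h2)
      _ ≤ alphaM V₁ (N₁ : Set (EuclideanSpace ℝ (Fin d₁))) := hA ψF hψFcopy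
  -- image bound
  have himg : (Pairs.image Θ).card ≤ V₂.card ^ N₂.card := by
    have h1 : (Pairs.image Θ).card ≤ (N₂.pi (fun _ => V₂)).card := by
      apply Finset.card_le_card_of_injOn (fun F => fun y hy => F y)
      · intro F hF
        rw [Finset.mem_coe, Finset.mem_pi]
        intro y hy
        obtain ⟨p, hp, rfl⟩ := Finset.mem_image.1 hF
        obtain ⟨-, hmem, -⟩ := frEnc_spec N₂ Wf hystar p (hPcond p hp)
        exact Finset.mem_of_mem_filter _ (hmem y hy)
      · intro F hF G hG hEq
        obtain ⟨p, hp, hpF⟩ := Finset.mem_image.1 hF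
        obtain ⟨q, hq, hqG⟩ := Finset.mem_image.1 hG
        funext y
        by_cases hy : y ∈ N₂
        · exact congrFun (congrFun hEq y) hy
        · rw [← hpF, ← hqG, hΘdef, frEnc_of_not_mem N₂ Wf ystar p hy,
            frEnc_of_not_mem N₂ Wf ystar q hy]
    calc (Pairs.image Θ).card ≤ (N₂.pi (fun _ => V₂)).card := h1
      _ = V₂.card ^ N₂.card := by rw [Finset.card_pi, Finset.prod_const]
  -- put everything together
  have hD : Pairs.card ≤ alphaM V₁ (N₁ : Set (EuclideanSpace ℝ (Fin d₁))) * V₂.card ^ N₂.card := by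
    calc Pairs.card ≤ alphaM V₁ (N₁ : Set (EuclideanSpace ℝ (Fin d₁))) * (Pairs.image Θ).card :=
          Finset.card_le_mul_card_image Pairs _ hfiber
      _ ≤ _ := Nat.mul_le_mul_left _ himg
  calc W.card = ∑ v₁ ∈ V₁, (Wf v₁).card := hcardW
    _ = ∑ v₁ ∈ V₁, ((Cs v₁).card + (Ds v₁).card) := by
        exact Finset.sum_congr rfl fun v₁ _ => (hCD v₁).symm
    _ = (∑ v₁ ∈ V₁, (Cs v₁).card) + ∑ v₁ ∈ V₁, (Ds v₁).card := Finset.sum_add_distrib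
    _ ≤ V₁.card * alphaM V₂ (N₂ : Set (EuclideanSpace ℝ (Fin d₂))) +
        alphaM V₁ (N₁ : Set (EuclideanSpace ℝ (Fin d₁))) * V₂.card ^ N₂.card := by
        gcongr ?_ + ?_
        · calc (∑ v₁ ∈ V₁, (Cs v₁).card) ≤
              ∑ _v₁ ∈ V₁, alphaM V₂ (N₂ : Set (EuclideanSpace ℝ (Fin d₂))) :=
                Finset.sum_le_sum fun v₁ _ => hCbound v₁
            _ = V₁.card * alphaM V₂ (N₂ : Set (EuclideanSpace ℝ (Fin d₂))) := by
                rw [Finset.sum_const, smul_eq_mul]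
        · rw [hPairscard]; exact hD
end
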